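/- Let n be a positive integer, λ = (p_1,…,p_k) a partition of n, f : {1,…,n} → {1,…,k} the map with f(s) = i exactly when p_1+⋯+p_{i−1} < s ≤ p_1+⋯+p_i, and G = {φ ∈ S_n : f∘φ = f}. For τ, σ ∈ S_n define v_f(τ,σ) := ∏ q_{f(τ(i)),f(τ(j))}, the product over pairs (i,j) with 1 ≤ i < j ≤ n and σ⁻¹(τ(i)) > σ⁻¹(τ(j)), in the polynomial ring ℤ[q_{a,b} : a,b ∈ {1,…,k}]. Then for all σ, τ ∈ S_n and every υ ∈ G: Σ_{φ ∈ G} v_f(φ∘τ, υ∘σ) = Σ_{φ ∈ G} v_f(φ∘τ, σ). -/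

import Mathlib

/-- The polynomial ring `R_k = ℤ[q_{a,b} : a,b ∈ {1,…,k}]`. -/
abbrev Rk (k : ℕ) : Type := MvPolynomial (Fin k × Fin k) ℤ

/-- `v_f(τ,σ)`: the product of `q_{f(τ(i)),f(τ(j))}` over the pairs `i < j`
with `σ⁻¹(τ(i)) > σ⁻¹(τ(j))`. -/
noncomputable def vf {n k : ℕ} (f : Fin n → Fin k) (τ σ : Equiv.Perm (Fin n)) :
    Rk k :=
  ∏ p ∈ Finset.univ.filter
      (fun p : Fin n × Fin n => p.1 < p.2 ∧ σ⁻¹ (τ p.2) < σ⁻¹ (τ p.1)),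
    MvPolynomial.X (f (τ p.1), f (τ p.2))

/-- The Young subgroup `G = {φ ∈ S_n : f ∘ φ = f}` (as a finset). -/
def youngG {n k : ℕ} (f : Fin n → Fin k) : Finset (Equiv.Perm (Fin n)) :=
  Finset.univ.filter fun φ => f ∘ ⇑φ = f


lemma young_mem {n k : ℕ} {f : Fin n → Fin k} {υ : Equiv.Perm (Fin n)}
    (hυ : υ ∈ youngG f) (x : Fin n) : f (υ x) = f x := by
  have h : f ∘ ⇑υ = f := (Finset.mem_filter.mp hυ).2
  exact congrFun h x

lemma young_inv_apply {n k : ℕ} {f : Fin n → Fin k} {υ : Equiv.Perm (Fin n)}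
    (hυ : υ ∈ youngG f) (x : Fin n) : f (υ⁻¹ x) = f x := by
  conv_rhs => rw [← show υ (υ⁻¹ x) = x from by simp]
  exact (young_mem hυ (υ⁻¹ x)).symm

lemma young_inv_mem {n k : ℕ} {f : Fin n → Fin k} {υ : Equiv.Perm (Fin n)}
    (hυ : υ ∈ youngG f) : υ⁻¹ ∈ youngG f := by
  simp only [youngG, Finset.mem_filter, Finset.mem_univ, true_and]
  funext x; exact young_inv_apply hυ x

lemma young_mul_mem {n k : ℕ} {f : Fin n → Fin k} {υ φ : Equiv.Perm (Fin n)}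
    (hυ : υ ∈ youngG f) (hφ : φ ∈ youngG f) : υ * φ ∈ youngG f := by
  simp only [youngG, Finset.mem_filter, Finset.mem_univ, true_and]
  funext x
  simp only [Function.comp_apply, Equiv.Perm.mul_apply, young_mem hυ, young_mem hφ]

theorem coset_sum_vf_invariant (n k : ℕ) (hn : 0 < n)
    (p : Fin k → ℕ) (hpos : ∀ i, 0 < p i)
    (hmono : ∀ i j : Fin k, i ≤ j → p j ≤ p i) (hsum : ∑ i, p i = n)
    (f : Fin n → Fin k)
    (hf : ∀ (s : Fin n) (i : Fin k),
      f s = i ↔ ∑ j ∈ Finset.Iio i, p j ≤ (s : ℕ) ∧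
        (s : ℕ) < ∑ j ∈ Finset.Iic i, p j)
    (σ τ : Equiv.Perm (Fin n)) (υ : Equiv.Perm (Fin n)) (hυ : υ ∈ youngG f) :
    ∑ φ ∈ youngG f, vf f (φ * τ) (υ * σ) = ∑ φ ∈ youngG f, vf f (φ * τ) σ := by
  have hkey : ∀ φ ∈ youngG f, vf f (φ * τ) (υ * σ) = vf f (υ⁻¹ * φ * τ) σ := by
    intro φ hφ
    unfold vf
    apply Finset.prod_congr
    · ext q
      rw [Finset.mem_filter, Finset.mem_filter]
      simp [mul_inv_rev, Equiv.Perm.mul_apply]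
    · intro q _
      simp [Equiv.Perm.mul_apply, young_inv_apply hυ]
      exact ⟨(young_inv_apply hυ _).symm, (young_inv_apply hυ _).symm⟩
  rw [Finset.sum_congr rfl hkey]
  apply Finset.sum_nbij' (fun φ => υ⁻¹ * φ) (fun φ => υ * φ)
  · intro a ha; exact young_mul_mem (young_inv_mem hυ) ha
  · intro a ha; exact young_mul_mem hυ ha
  · intro a _; group
  · intro a _; group
  · intro a _; rfl
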